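/- Let (W, ω) be a symplectic ℚ-vector space and à ∈ Sp(W, ω) with χ_à = ρρ*, ρ irreducible, ρ ≠ ρ*. Identify W ≅ W̄ × W̄* with ω((v,λ),(w,μ)) = λ(w) − μ(v), where W̄ = ker ρ(Ã). Then the centralizer of à in Sp(W, ω) equals {diag(B, (B⁻¹)ᵀ) : B ∈ GL(W̄) commuting with Ã|_{W̄}}, and is hence isomorphic to GL(W̄)_{Ã|_{W̄}}. -/

import Mathlib

open Polynomial LinearMap Module
set_option synthInstance.maxHeartbeats 1000000
set_option maxHeartbeats 1600000

section Helpers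
variable {R M N : Type*} [CommRing R] [AddCommGroup M] [Module R M]
  [AddCommGroup N] [Module R N]

private lemma my_prodMap_pow (f : M →ₗ[R] M) (g : N →ₗ[R] N) (n : ℕ) :
    (f.prodMap g) ^ n = (f ^ n).prodMap (g ^ n) := by
  induction n with
  | zero => ext x <;> rfl
  | succ n ih => rw [pow_succ, pow_succ, pow_succ, ih, LinearMap.prodMap_mul]

private lemma my_aeval_prodMap (f : M →ₗ[R] M) (g : N →ₗ[R] N) (p : R[X]) :
    aeval (f.prodMap g) p = (aeval f p).prodMap (aeval g p) := by
  induction p using Polynomial.induction_on' with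
  | add p q hp hq =>
    rw [map_add, map_add, map_add, hp, hq]; ext x <;> simp
  | monomial n a =>
    rw [aeval_monomial, aeval_monomial, aeval_monomial, my_prodMap_pow]
    ext x <;> simp [Algebra.algebraMap_eq_smul_one]

private lemma my_dualMap_add (f g : M →ₗ[R] M) :
    (f + g).dualMap = f.dualMap + g.dualMap := by
  ext φ x; simp

private lemma my_dualMap_pow (f : M →ₗ[R] M) (n : ℕ) :
    (f ^ n).dualMap = f.dualMap ^ n := by
  induction n with
  | zero => ext φ x; simp
  | succ n ih =>
    rw [pow_succ, pow_succ', ← ih]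
    ext φ x
    simp [LinearMap.dualMap_apply, Module.End.mul_apply]

private lemma my_aeval_dualMap (f : M →ₗ[R] M) (p : R[X]) :
    (aeval f p).dualMap = aeval f.dualMap p := by
  induction p using Polynomial.induction_on' with
  | add p q hp hq => rw [map_add, map_add, my_dualMap_add, hp, hq]
  | monomial n a =>
    rw [aeval_monomial, aeval_monomial, ← my_dualMap_pow]
    ext φ x
    simp [Algebra.algebraMap_eq_smul_one, LinearMap.dualMap_apply, Module.End.mul_apply]

private lemma my_aeval_comm (f g : M →ₗ[R] M) (h : ∀ x, f (g x) = g (f x)) (p : R[X]) :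
    ∀ x, f (aeval g p x) = aeval g p (f x) := by
  have h' : Commute f g := LinearMap.ext h
  have hc : Commute f (aeval g p) := by
    induction p using Polynomial.induction_on' with
    | add p q hp hq => rw [map_add]; exact Commute.add_right hp hq
    | monomial n a =>
      rw [aeval_monomial]
      exact ((Algebra.commute_algebraMap_right _ _).mul_right (h'.pow_right n))
  intro x
  exact congrFun (congrArg (fun k => k.toFun) hc) x

end Helpers


/-- Identify `W ≅ W̄ × W̄*` with `ω((v,λ),(w,μ)) = λ(w) − μ(v)`, and let
`Ã = diag(A, (A⁻¹)ᵀ)` with `χ_Ã = ρ·ρ*`, `ρ = χ_A` irreducible and `ρ ≠ ρ*`.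
Then the centralizer of `Ã` in `Sp(W, ω)` consists exactly of the maps
`diag(B, (B⁻¹)ᵀ)` with `B ∈ GL(W̄)` commuting with `A`. -/
theorem stmt_10 (V : Type*) [AddCommGroup V] [Module ℚ V] [FiniteDimensional ℚ V]
    (A : V ≃ₗ[ℚ] V)
    (hirr : Irreducible (LinearMap.charpoly (A : V →ₗ[ℚ] V)))
    (hne : LinearMap.charpoly (A : V →ₗ[ℚ] V) ≠
      LinearMap.charpoly (A.symm : V →ₗ[ℚ] V)) :
    ∀ C : (V × Module.Dual ℚ V) ≃ₗ[ℚ] (V × Module.Dual ℚ V),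
      ((∀ p q : V × Module.Dual ℚ V,
          (C p).2 (C q).1 - (C q).2 (C p).1 = p.2 q.1 - q.2 p.1) ∧
        (∀ p, C ((A.prodCongr A.symm.dualMap) p) = (A.prodCongr A.symm.dualMap) (C p))) ↔
      ∃ B : V ≃ₗ[ℚ] V, (∀ v, B (A v) = A (B v)) ∧ C = B.prodCongr B.symm.dualMap := by
  intro C
  classical
  set ρ : ℚ[X] := LinearMap.charpoly (A : V →ₗ[ℚ] V) with hρdef
  set σ : ℚ[X] := LinearMap.charpoly (A.symm : V →ₗ[ℚ] V) with hσdef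
  have hρm : ρ.Monic := LinearMap.charpoly_monic _
  have hσm : σ.Monic := LinearMap.charpoly_monic _
  -- coprimality
  have hcop : IsCoprime ρ σ := by
    rw [hirr.coprime_iff_not_dvd]
    intro hdvd
    apply hne
    refine Polynomial.eq_of_monic_of_associated hρm hσm ?_
    refine Polynomial.associated_of_dvd_of_degree_eq hdvd ?_
    rw [Polynomial.degree_eq_natDegree hρm.ne_zero,
      Polynomial.degree_eq_natDegree hσm.ne_zero,
      LinearMap.charpoly_natDegree, LinearMap.charpoly_natDegree]
  obtain ⟨u, w, huw⟩ := hcop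
  set D₀ : Dual ℚ V →ₗ[ℚ] Dual ℚ V := (A.symm : V →ₗ[ℚ] V).dualMap with hD₀def
  have hρA : aeval ((A : V →ₗ[ℚ] V)) ρ = 0 := LinearMap.aeval_self_charpoly _
  have hσAs : aeval ((A.symm : V →ₗ[ℚ] V)) σ = 0 := LinearMap.aeval_self_charpoly _
  have hσD : aeval D₀ σ = 0 := by
    rw [hD₀def, ← my_aeval_dualMap, hσAs]
    ext φ x; simp
  -- injectivity of σ(A) and ρ(D₀)
  have hinjσA : Function.Injective (aeval ((A : V →ₗ[ℚ] V)) σ) := by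
    have h1 : aeval ((A : V →ₗ[ℚ] V)) w * aeval ((A : V →ₗ[ℚ] V)) σ = 1 := by
      have h := congrArg (aeval ((A : V →ₗ[ℚ] V))) huw
      rw [map_add, map_mul, map_mul, hρA, mul_zero, zero_add, map_one] at h
      exact h
    intro x y hxy
    have hl : ∀ z, (aeval ((A : V →ₗ[ℚ] V)) w) ((aeval ((A : V →ₗ[ℚ] V)) σ) z) = z := by
      intro z
      have := congrFun (congrArg (fun k : Module.End ℚ V => k.toFun) h1) z
      simpa [Module.End.mul_apply] using this
    rw [← hl x, ← hl y, hxy]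
  have hinjρD : Function.Injective (aeval D₀ ρ) := by
    have h1 : aeval D₀ u * aeval D₀ ρ = 1 := by
      have h := congrArg (aeval D₀) huw
      rw [map_add, map_mul, map_mul, hσD, mul_zero, add_zero, map_one] at h
      exact h
    intro x y hxy
    have hl : ∀ z, (aeval D₀ u) ((aeval D₀ ρ) z) = z := by
      intro z
      have := congrFun (congrArg (fun k : Module.End ℚ (Dual ℚ V) => k.toFun) h1) z
      simpa [Module.End.mul_apply] using this
    rw [← hl x, ← hl y, hxy]
  set T : (V × Dual ℚ V) →ₗ[ℚ] (V × Dual ℚ V) := ((A : V →ₗ[ℚ] V)).prodMap D₀ with hTdef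
  have hTapp : ∀ p : V × Dual ℚ V, (A.prodCongr A.symm.dualMap) p = T p := by
    intro p; rfl
  have haevalT : ∀ (p : ℚ[X]) (x : V × Dual ℚ V),
      aeval T p x = (aeval ((A : V →ₗ[ℚ] V)) p x.1, aeval D₀ p x.2) := by
    intro p x
    rw [hTdef, my_aeval_prodMap]
    rfl
  constructor
  · rintro ⟨hsymp, hcomm⟩
    have hcomm' : ∀ x, (C : (V × Dual ℚ V) →ₗ[ℚ] (V × Dual ℚ V)) (T x) =
        T ((C : (V × Dual ℚ V) →ₗ[ℚ] (V × Dual ℚ V)) x) := by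
      intro x
      have := hcomm x
      rw [hTapp, hTapp] at this
      exact this
    have hCaeval := my_aeval_comm (C : (V × Dual ℚ V) →ₗ[ℚ] (V × Dual ℚ V)) T hcomm'
    have key1 : ∀ v : V, (C (v, 0)).2 = 0 := by
      intro v
      have h0 : aeval T ρ (v, (0 : Dual ℚ V)) = 0 := by
        rw [haevalT]
        simp [hρA]
      have h1 : aeval T ρ (C (v, 0)) = 0 := by
        have h := hCaeval ρ (v, 0)
        rw [h0] at h
        simpa using h.symm
      rw [haevalT] at h1
      have h2 : aeval D₀ ρ (C (v, 0)).2 = 0 := congrArg Prod.snd h1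
      exact hinjρD (by simpa using h2)
    have key2 : ∀ φ : Dual ℚ V, (C ((0 : V), φ)).1 = 0 := by
      intro φ
      have h0 : aeval T σ ((0 : V), φ) = 0 := by
        rw [haevalT]
        simp [hσD]
      have h1 : aeval T σ (C (0, φ)) = 0 := by
        have h := hCaeval σ (0, φ)
        rw [h0] at h
        simpa using h.symm
      rw [haevalT] at h1
      have h2 : aeval ((A : V →ₗ[ℚ] V)) σ (C (0, φ)).1 = 0 := congrArg Prod.fst h1
      exact hinjσA (by simpa using h2)
    set B₁ : V →ₗ[ℚ] V :=
      (LinearMap.fst ℚ V (Dual ℚ V)) ∘ₗ (C : _ →ₗ[ℚ] _) ∘ₗ (LinearMap.inl ℚ V (Dual ℚ V))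
      with hB₁def
    set B₂ : V →ₗ[ℚ] V :=
      (LinearMap.fst ℚ V (Dual ℚ V)) ∘ₗ (C.symm : _ →ₗ[ℚ] _) ∘ₗ (LinearMap.inl ℚ V (Dual ℚ V))
      with hB₂def
    have hB₁ : ∀ v, C (v, 0) = (B₁ v, 0) := by
      intro v
      exact Prod.ext rfl (key1 v)
    have hBB' : ∀ v, B₂ (B₁ v) = v := by
      intro v
      have : C.symm (C (v, 0)) = (v, 0) := C.symm_apply_apply _
      rw [hB₁ v] at this
      have := congrArg Prod.fst this
      simpa [hB₂def] using this
    have hBB : ∀ v, B₁ (B₂ v) = v := by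
      intro v
      have hsplit : C.symm (v, (0 : Dual ℚ V)) =
          ((B₂ v, 0) : V × Dual ℚ V) + (0, (C.symm (v, 0)).2) := by
        simp [hB₂def]
      have h1 : C (C.symm (v, (0 : Dual ℚ V))) = (v, 0) := C.apply_symm_apply _
      rw [hsplit, map_add] at h1
      have := congrArg Prod.fst h1
      simpa [hB₁ (B₂ v), key2] using this
    set B : V ≃ₗ[ℚ] V :=
      LinearEquiv.ofLinear B₁ B₂ (LinearMap.ext hBB) (LinearMap.ext hBB') with hBdef
    have hBapp : ∀ v, B v = B₁ v := fun v => rfl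
    have hBsymm : ∀ v, B.symm v = B₂ v := fun v => rfl
    refine ⟨B, ?_, ?_⟩
    · intro v
      have := hcomm (v, 0)
      rw [hB₁ v] at this
      simp only [LinearEquiv.prodCongr_apply, map_zero] at this
      have h1 := congrArg Prod.fst this
      rw [hB₁ (A v)] at h1
      simpa [hBapp] using h1
    · apply LinearEquiv.ext
      intro p
      obtain ⟨v, φ⟩ := p
      have hsplit : ((v, φ) : V × Dual ℚ V) = (v, 0) + (0, φ) := by simp
      rw [hsplit, map_add, map_add, hB₁ v]
      have hD : (C ((0 : V), φ)) = (0, (C (0, φ)).2) := Prod.ext (key2 φ) rfl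
      rw [hD]
      have hDφ : (C ((0 : V), φ)).2 = B.symm.dualMap φ := by
        ext x
        have hx : x = B₁ (B₂ x) := (hBB x).symm
        rw [hx]
        have := hsymp ((0 : V), φ) ((B₂ x), 0)
        rw [hB₁ (B₂ x)] at this
        simp only [key1] at this
        simp only [LinearMap.zero_apply] at this
        have h2 : (C ((0:V), φ)).2 (B₁ (B₂ x)) = φ (B₂ x) := by
          simpa using this
        rw [h2]
        simp [LinearEquiv.dualMap_apply, hBsymm, hBB]
      rw [hDφ]
      simp [LinearEquiv.prodCongr_apply, hBapp]
  · rintro ⟨B, hBA, rfl⟩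
    have hABsymm : ∀ x, A.symm (B.symm x) = B.symm (A.symm x) := by
      intro x
      apply A.injective
      apply B.injective
      rw [hBA (B.symm (A.symm x))]
      simp
    constructor
    · intro p q
      simp [LinearEquiv.prodCongr_apply, LinearEquiv.dualMap_apply]
    · intro p
      apply Prod.ext
      · simpa using hBA p.1
      · ext x
        simp [LinearEquiv.prodCongr_apply, LinearEquiv.dualMap_apply, hABsymm]
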